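/- The dimensions and constants of the decomposition satisfy 2·∑_{j=1}^m d_j(1−κ_j) = n. -/

import Mathlib

open Module LinearMap

/-- Any positive-definite symmetric bilinear form on a finite-dimensional real vector
space admits an orthonormal basis. -/
lemma exists_onb_of_posdef {V : Type*} [AddCommGroup V] [Module ℝ V]
    [FiniteDimensional ℝ V] (G : V →ₗ[ℝ] V →ₗ[ℝ] ℝ)
    (hsymm : ∀ x y, G x y = G y x) (hpos : ∀ x, x ≠ 0 → 0 < G x x) :
    ∃ b : Basis (Fin (finrank ℝ V)) ℝ V, ∀ i j, G (b i) (b j) = if i = j then 1 else 0 := by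
  let core : InnerProductSpace.Core ℝ V :=
  { inner := fun x y => G x y
    conj_inner_symm := fun x y => by simpa using hsymm y x
    re_inner_nonneg := fun x => by
      rcases eq_or_ne x 0 with h | h
      · simp [h]
      · simpa using (hpos x h).le
    definite := fun x hx => by
      by_contra h
      exact (hpos x h).ne' (by simpa using hx)
    add_left := fun x y z => by simp
    smul_left := fun x y r => by simp }
  letI : NormedAddCommGroup V := core.toNormedAddCommGroup
  letI : InnerProductSpace ℝ V := InnerProductSpace.ofCore core.toCore
  let b := stdOrthonormalBasis ℝ V
  refine ⟨b.toBasis, fun i j => ?_⟩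
  have h2 := orthonormal_iff_ite.mp b.orthonormal i j
  exact h2

/-- Negative-definite version of `exists_onb_of_posdef`. -/
lemma exists_onb_of_negdef {V : Type*} [AddCommGroup V] [Module ℝ V]
    [FiniteDimensional ℝ V] (G : V →ₗ[ℝ] V →ₗ[ℝ] ℝ)
    (hsymm : ∀ x y, G x y = G y x) (hneg : ∀ x, x ≠ 0 → G x x < 0) :
    ∃ b : Basis (Fin (finrank ℝ V)) ℝ V, ∀ i j, G (b i) (b j) = if i = j then -1 else 0 := by
  obtain ⟨b, hb⟩ := exists_onb_of_posdef (-G)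
    (fun x y => by simpa using congrArg Neg.neg (hsymm x y))
    (fun x hx => by simpa using hneg x hx)
  refine ⟨b, fun i j => ?_⟩
  have h := hb i j
  simp only [LinearMap.neg_apply, LinearMap.neg_apply] at h
  rcases eq_or_ne i j with rfl | hne
  · simp only [eq_self_iff_true, if_true] at h ⊢; linarith
  · simp only [if_neg hne] at h ⊢; linarith

/-- The trace of an endomorphism can be computed by summing a bilinear form over a
basis which is orthonormal for that form. -/
lemma trace_eq_sum_form {V : Type*} [AddCommGroup V] [Module ℝ V] [Module.Finite ℝ V]
    {ι : Type*} [Fintype ι] [DecidableEq ι] (b : Basis ι ℝ V)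
    (G : V →ₗ[ℝ] V →ₗ[ℝ] ℝ) (hb : ∀ i j, G (b i) (b j) = if i = j then 1 else 0)
    (T : V →ₗ[ℝ] V) :
    trace ℝ V T = ∑ i, G (b i) (T (b i)) := by
  have hcoord : ∀ (v : V) i, G (b i) v = b.repr v i := by
    intro v i
    conv_lhs => rw [← b.sum_repr v]
    rw [map_sum]
    simp only [map_smul, hb, smul_eq_mul]
    rw [Finset.sum_eq_single i]
    · simp
    · intro j _ hj
      simp [Ne.symm hj]
    · intro h; exact absurd (Finset.mem_univ i) h
  rw [trace_eq_matrix_trace ℝ b, Matrix.trace]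
  simp only [Matrix.diag_apply, LinearMap.toMatrix_apply, hcoord]

set_option maxHeartbeats 2000000 in
set_option synthInstance.maxHeartbeats 200000 in
/-- Equation (3.2) of the paper: `2 ∑ⱼ dⱼ(1 - κⱼ) = n` for a Cartan decomposition
`𝔤 = 𝔭 ⊕ 𝔨` and a decomposition `𝔨 = 𝔨₁ ⊕ ⋯ ⊕ 𝔨_m` into `B`-orthogonal ideals whose
Killing forms are `κⱼ B|_{𝔨ⱼ}`. -/
theorem stmt_2
    (𝔤 : Type*) [LieRing 𝔤] [LieAlgebra ℝ 𝔤] [FiniteDimensional ℝ 𝔤]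
    (𝔭 : Submodule ℝ 𝔤) (𝔨 : LieSubalgebra ℝ 𝔤)
    (hcompl : IsCompl 𝔭 𝔨.toSubmodule)
    (hkp : ∀ x ∈ 𝔨, ∀ y ∈ 𝔭, ⁅x, y⁆ ∈ 𝔭)
    (hpp : ∀ x ∈ 𝔭, ∀ y ∈ 𝔭, ⁅x, y⁆ ∈ 𝔨)
    (horth : ∀ x ∈ 𝔭, ∀ y ∈ 𝔨, killingForm ℝ 𝔤 x y = 0)
    (hpos : ∀ x ∈ 𝔭, x ≠ 0 → 0 < killingForm ℝ 𝔤 x x)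
    (hneg : ∀ x ∈ 𝔨, x ≠ 0 → killingForm ℝ 𝔤 x x < 0)
    (m : ℕ) (𝔨s : Fin m → LieIdeal ℝ ↥𝔨) (κ : Fin m → ℝ)
    (hsup : (⨆ j, 𝔨s j) = ⊤)
    (horthk : ∀ j k, j ≠ k → ∀ x ∈ 𝔨s j, ∀ y ∈ 𝔨s k,
        killingForm ℝ 𝔤 (x : 𝔤) (y : 𝔤) = 0)
    (hκ : ∀ j, ∀ x y : ↥(𝔨s j),
        killingForm ℝ ↥(𝔨s j) x y
          = κ j * killingForm ℝ 𝔤 ((x : ↥𝔨) : 𝔤) ((y : ↥𝔨) : 𝔤)) :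
    2 * ∑ j, (Module.finrank ℝ ↥(𝔨s j) : ℝ) * (1 - κ j)
      = (Module.finrank ℝ ↥𝔭 : ℝ) := by
  classical
  set B : 𝔤 →ₗ[ℝ] 𝔤 →ₗ[ℝ] ℝ := killingForm ℝ 𝔤 with hBdef
  set fk : ↥𝔨 →ₗ[ℝ] 𝔤 := 𝔨.toSubmodule.subtype with hfk
  haveI : FiniteDimensional ℝ ↥𝔨 := inferInstanceAs (FiniteDimensional ℝ ↥𝔨.toSubmodule)
  haveI : ∀ j : Fin m, FiniteDimensional ℝ ↥(𝔨s j) := fun j =>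
    inferInstanceAs (FiniteDimensional ℝ ↥((𝔨s j : Submodule ℝ ↥𝔨)))
  -- orthonormal basis of 𝔭
  obtain ⟨P, hP⟩ : ∃ b : Basis (Fin (finrank ℝ ↥𝔭)) ℝ ↥𝔭,
      ∀ i j, killingForm ℝ 𝔤 (b i : 𝔤) (b j : 𝔤) = if i = j then 1 else 0 := by
    obtain ⟨b, hb⟩ := exists_onb_of_posdef (B.compl₁₂ 𝔭.subtype 𝔭.subtype)
      (fun x y => LieModule.traceForm_comm ℝ 𝔤 𝔤 _ _)
      (fun x hx => hpos x x.2 (by simpa using hx))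
    exact ⟨b, fun i j => hb i j⟩
  -- orthonormal bases of the ideals
  have hGj : ∀ j : Fin m, ∃ b : Basis (Fin (finrank ℝ ↥(𝔨s j))) ℝ ↥(𝔨s j),
      ∀ i i', killingForm ℝ 𝔤 ((b i : ↥𝔨) : 𝔤) ((b i' : ↥𝔨) : 𝔤)
        = if i = i' then -1 else 0 := by
    intro j
    set fj : ↥(𝔨s j) →ₗ[ℝ] 𝔤 := fk ∘ₗ ((𝔨s j : Submodule ℝ ↥𝔨).subtype) with hfj
    obtain ⟨b, hb⟩ := exists_onb_of_negdef (B.compl₁₂ fj fj)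
      (fun x y => LieModule.traceForm_comm ℝ 𝔤 𝔤 (fj x) (fj y))
      (fun x hx => hneg _ ((x : ↥𝔨)).2 (fun h => hx (Subtype.ext (Subtype.ext h))))
    exact ⟨b, fun i i' => hb i i'⟩
  choose c hc using hGj
  -- internal direct sum decomposition of 𝔨 by the ideals
  set A : Fin m → Submodule ℝ ↥𝔨 := fun j => (𝔨s j : Submodule ℝ ↥𝔨) with hA
  have horthA : ∀ j j', j ≠ j' → ∀ x ∈ A j, ∀ y ∈ A j',
      killingForm ℝ 𝔤 (x : 𝔤) (y : 𝔤) = 0 := by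
    intro j j' hne x hx y hy
    exact horthk j j' hne x hx y hy
  have hInd : iSupIndep A := by
    intro j
    rw [Submodule.disjoint_def]
    intro x hxj hxrest
    have hzero : ∀ y : ↥𝔨, y ∈ (⨆ k, ⨆ _ : k ≠ j, A k) →
        killingForm ℝ 𝔤 (x : 𝔤) (y : 𝔤) = 0 := by
      intro y hy
      induction hy using Submodule.iSup_induction' with
      | mem k z hz =>
        rcases eq_or_ne k j with rfl | hne
        · simp only [iSup_neg (not_not.mpr rfl)] at hz
          simp [(Submodule.mem_bot ℝ).mp hz]
        · rw [iSup_pos hne] at hz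
          exact horthA j k (Ne.symm hne) x hxj z hz
      | zero => simp
      | add y z _ _ hy hz => push_cast [map_add]; rw [hy, hz]; ring
    have hself := hzero x hxrest
    by_contra hx0
    have hxg : (x : 𝔤) ≠ 0 := fun h => hx0 (Subtype.ext h)
    exact absurd hself (ne_of_lt (hneg _ x.2 hxg))
  have hsupA : (⨆ j, A j) = ⊤ := by
    have := congrArg (fun I : LieIdeal ℝ ↥𝔨 => (I : Submodule ℝ ↥𝔨)) hsup
    simpa [hA, LieSubmodule.iSup_toSubmodule] using this
  have hInt : DirectSum.IsInternal A :=
    DirectSum.isInternal_submodule_of_iSupIndep_of_iSup_eq_top hInd hsupA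
  -- the collected basis of 𝔨
  set K : Basis ((j : Fin m) × Fin (finrank ℝ ↥(𝔨s j))) ℝ ↥𝔨 :=
    hInt.collectedBasis c with hKdef
  have hKcoe : ∀ σ : (j : Fin m) × Fin (finrank ℝ ↥(𝔨s j)),
      (K σ : ↥𝔨) = ((c σ.1 σ.2 : ↥𝔨)) := by
    intro σ; rw [hKdef]; exact congrFun (hInt.collectedBasis_coe c) σ
  have hK : ∀ σ τ, killingForm ℝ 𝔤 ((K σ : ↥𝔨) : 𝔤) ((K τ : ↥𝔨) : 𝔤)
      = if σ = τ then -1 else 0 := by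
    rintro ⟨j, i⟩ ⟨j', i'⟩
    rw [hKcoe, hKcoe]
    rcases eq_or_ne j j' with rfl | hne
    · rw [hc j i i']
      by_cases h : i = i'
      · subst h; simp
      · simp [h, Sigma.mk.inj_iff]
    · rw [horthk j j' hne _ (c j i).2 _ (c j' i').2]
      simp [Sigma.mk.inj_iff, hne]
  -- the `-B`-orthonormality of `K`
  have hKon : ∀ σ τ, ((-B).compl₁₂ fk fk) (K σ) (K τ) = if σ = τ then 1 else 0 := by
    intro σ τ
    have h := hK σ τ
    show -(killingForm ℝ 𝔤 ((K σ : ↥𝔨) : 𝔤) ((K τ : ↥𝔨) : 𝔤)) = _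
    rw [h]
    split_ifs <;> norm_num
  -- master trace formula
  haveI hfinb : ∀ b : Bool, Module.Finite ℝ ↥(cond b 𝔭 𝔨.toSubmodule) := by
    intro b; cases b <;> infer_instance
  haveI hfreeb : ∀ b : Bool, Module.Free ℝ ↥(cond b 𝔭 𝔨.toSubmodule) := by
    intro b; cases b <;> infer_instance
  have hbool : DirectSum.IsInternal (fun b : Bool => cond b 𝔭 𝔨.toSubmodule) :=
    (DirectSum.isInternal_submodule_iff_isCompl _ (i := true) (j := false) (by decide)
      (by ext b; cases b <;> simp)).mpr hcompl
  have master : ∀ (f : 𝔤 →ₗ[ℝ] 𝔤) (hfp : ∀ x ∈ 𝔭, f x ∈ 𝔭)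
      (hfk : ∀ x ∈ 𝔨.toSubmodule, f x ∈ 𝔨.toSubmodule),
      trace ℝ 𝔤 f
        = (∑ a, killingForm ℝ 𝔤 (P a : 𝔤) (f (P a)))
          - ∑ σ, killingForm ℝ 𝔤 ((K σ : ↥𝔨) : 𝔤) (f ((K σ : ↥𝔨) : 𝔤)) := by
    intro f hfp hfk
    have hf : ∀ b : Bool, Set.MapsTo f
        (((cond b 𝔭 𝔨.toSubmodule : Submodule ℝ 𝔤) : Set 𝔤))
        (((cond b 𝔭 𝔨.toSubmodule : Submodule ℝ 𝔤) : Set 𝔤)) := by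
      intro b; cases b
      · exact hfk
      · exact hfp
    have hsplit : trace ℝ 𝔤 f
        = trace ℝ ↥𝔭 (f.restrict (hf true)) + trace ℝ ↥𝔨 (f.restrict (hf false)) :=
      (LinearMap.trace_eq_sum_trace_restrict hbool hf).trans (Fintype.sum_bool _)
    rw [hsplit, trace_eq_sum_form P (B.compl₁₂ 𝔭.subtype 𝔭.subtype) (fun i j => hP i j)
        (f.restrict (hf true)),
      trace_eq_sum_form K ((-B).compl₁₂ fk fk) hKon (f.restrict (hf false))]
    have e1 : ∀ a, (B.compl₁₂ 𝔭.subtype 𝔭.subtype) (P a) ((f.restrict (hf true)) (P a))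
        = killingForm ℝ 𝔤 (P a : 𝔤) (f (P a)) := by
      intro a
      show killingForm ℝ 𝔤 (P a : 𝔤) (((f.restrict (hf true)) (P a) : 𝔤)) = _
      rfl
    have e2 : ∀ σ, ((-B).compl₁₂ fk fk) (K σ) ((f.restrict (hf false)) (K σ))
        = -killingForm ℝ 𝔤 ((K σ : ↥𝔨) : 𝔤) (f ((K σ : ↥𝔨) : 𝔤)) := by
      intro σ
      show -(killingForm ℝ 𝔤 ((K σ : ↥𝔨) : 𝔤) (((f.restrict (hf false)) (K σ) : 𝔤))) = _
      rfl
    rw [sub_eq_add_neg, ← Finset.sum_neg_distrib]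
    exact congrArg₂ (· + ·) (Finset.sum_congr rfl fun a _ => e1 a)
      (Finset.sum_congr rfl fun σ _ => e2 σ)
  -- Killing form of 𝔨 via the basis K
  have hadk : ∀ x y : ↥𝔨, killingForm ℝ ↥𝔨 x y
      = ∑ σ, -(killingForm ℝ 𝔤 ((K σ : ↥𝔨) : 𝔤)
          ⁅(x : 𝔤), ⁅(y : 𝔤), ((K σ : ↥𝔨) : 𝔤)⁆⁆) := by
    intro x y
    rw [killingForm_apply_apply, trace_eq_sum_form K ((-B).compl₁₂ fk fk) hKon]
    refine Finset.sum_congr rfl fun σ _ => ?_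
    have h1 : (LieAlgebra.ad ℝ ↥𝔨 x ∘ₗ LieAlgebra.ad ℝ ↥𝔨 y) (K σ) = ⁅x, ⁅y, K σ⁆⁆ := by
      simp [LieAlgebra.ad_apply]
    show -(killingForm ℝ 𝔤 ((K σ : ↥𝔨) : 𝔤)
        (((LieAlgebra.ad ℝ ↥𝔨 x ∘ₗ LieAlgebra.ad ℝ ↥𝔨 y) (K σ) : ↥𝔨) : 𝔤)) = _
    rw [h1]
    simp only [LieSubalgebra.coe_bracket]
  -- Killing form of an ideal is the restriction of that of 𝔨
  have hid : ∀ (j : Fin m) (x y : ↥(𝔨s j)),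
      killingForm ℝ ↥(𝔨s j) x y = killingForm ℝ ↥𝔨 (x : ↥𝔨) (y : ↥𝔨) := by
    intro j x y
    rw [LieIdeal.killingForm_eq (R := ℝ) (L := ↥𝔨) (I := 𝔨s j)]
    rfl
  have hkk : ∀ σ : (j : Fin m) × Fin (finrank ℝ ↥(𝔨s j)),
      killingForm ℝ ↥𝔨 (K σ) (K σ) = -(κ σ.1) := by
    rintro ⟨j, i⟩
    rw [hKcoe ⟨j, i⟩, ← hid j (c j i) (c j i), hκ j (c j i) (c j i), hc j i i]
    simp
  -- the sum over a fixed `σ`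
  have hterm_k : ∀ σ : (j : Fin m) × Fin (finrank ℝ ↥(𝔨s j)),
      (∑ a, killingForm ℝ 𝔤 ⁅((K σ : ↥𝔨) : 𝔤), (P a : 𝔤)⁆ ⁅((K σ : ↥𝔨) : 𝔤), (P a : 𝔤)⁆)
        = 1 - κ σ.1 := by
    intro σ
    set X : 𝔤 := ((K σ : ↥𝔨) : 𝔤) with hXdef
    have hXk : X ∈ 𝔨 := (K σ : ↥𝔨).2
    have hmp : ∀ z ∈ 𝔭, (LieAlgebra.ad ℝ 𝔤 X ∘ₗ LieAlgebra.ad ℝ 𝔤 X) z ∈ 𝔭 := by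
      intro z hz
      simp only [coe_comp, Function.comp_apply, LieAlgebra.ad_apply]
      exact hkp X hXk _ (hkp X hXk z hz)
    have hmk : ∀ z ∈ 𝔨.toSubmodule,
        (LieAlgebra.ad ℝ 𝔤 X ∘ₗ LieAlgebra.ad ℝ 𝔤 X) z ∈ 𝔨.toSubmodule := by
      intro z hz
      simp only [coe_comp, Function.comp_apply, LieAlgebra.ad_apply]
      exact 𝔨.lie_mem hXk (𝔨.lie_mem hXk hz)
    have h2 := master _ hmp hmk
    rw [← killingForm_apply_apply] at h2
    simp only [coe_comp, Function.comp_apply, LieAlgebra.ad_apply] at h2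
    have hXX : killingForm ℝ 𝔤 X X = -1 := by rw [hXdef, hK σ σ]; simp
    have hkpart : ∑ τ, killingForm ℝ 𝔤 ((K τ : ↥𝔨) : 𝔤) ⁅X, ⁅X, ((K τ : ↥𝔨) : 𝔤)⁆⁆
        = κ σ.1 := by
      have h3 := hadk (K σ) (K σ)
      rw [hkk σ] at h3
      rw [Finset.sum_neg_distrib] at h3
      linarith
    have hinv : ∀ a, killingForm ℝ 𝔤 ⁅X, (P a : 𝔤)⁆ ⁅X, (P a : 𝔤)⁆
        = -(killingForm ℝ 𝔤 (P a : 𝔤) ⁅X, ⁅X, (P a : 𝔤)⁆⁆) :=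
      fun a => LieModule.traceForm_apply_lie_apply' ℝ 𝔤 𝔤 X (P a : 𝔤) ⁅X, (P a : 𝔤)⁆
    rw [Finset.sum_congr rfl fun a _ => hinv a, Finset.sum_neg_distrib]
    have h4 : ∑ a, killingForm ℝ 𝔤 (P a : 𝔤) ⁅X, ⁅X, (P a : 𝔤)⁆⁆ = -1 + κ σ.1 := by
      rw [hkpart] at h2
      linarith [hXX, h2]
    rw [h4]; ring
  -- the sum over a fixed `a`
  have hterm_p : ∀ a : Fin (finrank ℝ ↥𝔭),
      (∑ σ : (j : Fin m) × Fin (finrank ℝ ↥(𝔨s j)),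
        killingForm ℝ 𝔤 ⁅((K σ : ↥𝔨) : 𝔤), (P a : 𝔤)⁆ ⁅((K σ : ↥𝔨) : 𝔤), (P a : 𝔤)⁆)
        = 1 / 2 := by
    intro a
    set X : 𝔤 := (P a : 𝔤) with hXdef
    have hXp : X ∈ 𝔭 := (P a).2
    have hmkp : ∀ z ∈ 𝔨.toSubmodule, LieAlgebra.ad ℝ 𝔤 X z ∈ 𝔭 := by
      intro z hz
      simp only [LieAlgebra.ad_apply]
      rw [← lie_skew]
      exact neg_mem (hkp z hz X hXp)
    have hmpk : ∀ z ∈ 𝔭, LieAlgebra.ad ℝ 𝔤 X z ∈ 𝔨.toSubmodule := by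
      intro z hz
      simp only [LieAlgebra.ad_apply]
      exact hpp X hXp z hz
    set Amap : ↥𝔨.toSubmodule →ₗ[ℝ] ↥𝔭 := (LieAlgebra.ad ℝ 𝔤 X).restrict hmkp with hAm
    set Cmap : ↥𝔭 →ₗ[ℝ] ↥𝔨.toSubmodule := (LieAlgebra.ad ℝ 𝔤 X).restrict hmpk with hCm
    set Emap : ↥𝔨 →ₗ[ℝ] ↥𝔨 := Cmap ∘ₗ Amap with hEm
    have hswap : trace ℝ ↥𝔭 (Amap ∘ₗ Cmap) = trace ℝ ↥𝔨 Emap :=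
      (LinearMap.trace_comp_comm' Amap Cmap).symm
    have hAC : trace ℝ ↥𝔭 (Amap ∘ₗ Cmap)
        = ∑ b, killingForm ℝ 𝔤 (P b : 𝔤) ⁅X, ⁅X, (P b : 𝔤)⁆⁆ := by
      rw [trace_eq_sum_form P (B.compl₁₂ 𝔭.subtype 𝔭.subtype) (fun i j => hP i j)]
      refine Finset.sum_congr rfl fun b _ => ?_
      have hco : (((Amap ∘ₗ Cmap) (P b) : ↥𝔭) : 𝔤) = ⁅X, ⁅X, (P b : 𝔤)⁆⁆ := by
        show ((Amap (Cmap (P b)) : ↥𝔭) : 𝔤) = _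
        rw [hAm, LinearMap.restrict_coe_apply, hCm, LinearMap.restrict_coe_apply]
        simp [LieAlgebra.ad_apply]
      show killingForm ℝ 𝔤 (P b : 𝔤) (((Amap ∘ₗ Cmap) (P b) : ↥𝔭) : 𝔤) = _
      rw [hco]
    have hCA : trace ℝ ↥𝔨 Emap
        = ∑ σ, -(killingForm ℝ 𝔤 ((K σ : ↥𝔨) : 𝔤) ⁅X, ⁅X, ((K σ : ↥𝔨) : 𝔤)⁆⁆) := by
      rw [trace_eq_sum_form K ((-B).compl₁₂ fk fk) hKon]
      refine Finset.sum_congr rfl fun σ _ => ?_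
      have hco : ((Emap (K σ) : ↥𝔨) : 𝔤) = ⁅X, ⁅X, ((K σ : ↥𝔨) : 𝔤)⁆⁆ := by
        show ((Cmap (Amap (K σ)) : ↥𝔨.toSubmodule) : 𝔤) = _
        rw [hCm, LinearMap.restrict_coe_apply, hAm, LinearMap.restrict_coe_apply]
        simp [LieAlgebra.ad_apply]
      show -(killingForm ℝ 𝔤 ((K σ : ↥𝔨) : 𝔤) ((Emap (K σ) : ↥𝔨) : 𝔤)) = _
      rw [hco]
    have hmp2 : ∀ z ∈ 𝔭, (LieAlgebra.ad ℝ 𝔤 X ∘ₗ LieAlgebra.ad ℝ 𝔤 X) z ∈ 𝔭 := by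
      intro z hz
      exact hmkp _ (hmpk z hz)
    have hmk2 : ∀ z ∈ 𝔨.toSubmodule,
        (LieAlgebra.ad ℝ 𝔤 X ∘ₗ LieAlgebra.ad ℝ 𝔤 X) z ∈ 𝔨.toSubmodule := by
      intro z hz
      exact hmpk _ (hmkp z hz)
    have h2 := master _ hmp2 hmk2
    rw [← killingForm_apply_apply] at h2
    simp only [coe_comp, Function.comp_apply, LieAlgebra.ad_apply] at h2
    have hXX : killingForm ℝ 𝔤 X X = 1 := by rw [hXdef, hP a a]; simp
    have hkey : ∑ σ : (j : Fin m) × Fin (finrank ℝ ↥(𝔨s j)),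
        killingForm ℝ 𝔤 ((K σ : ↥𝔨) : 𝔤) ⁅X, ⁅X, ((K σ : ↥𝔨) : 𝔤)⁆⁆ = -(1 / 2) := by
      have h5 := hswap
      rw [hAC, hCA, Finset.sum_neg_distrib] at h5
      linarith [h2, hXX, h5]
    have hinv : ∀ σ : (j : Fin m) × Fin (finrank ℝ ↥(𝔨s j)),
        killingForm ℝ 𝔤 ⁅((K σ : ↥𝔨) : 𝔤), X⁆ ⁅((K σ : ↥𝔨) : 𝔤), X⁆
          = -(killingForm ℝ 𝔤 ((K σ : ↥𝔨) : 𝔤) ⁅X, ⁅X, ((K σ : ↥𝔨) : 𝔤)⁆⁆) := by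
      intro σ
      have hsk : ⁅((K σ : ↥𝔨) : 𝔤), X⁆ = -⁅X, ((K σ : ↥𝔨) : 𝔤)⁆ := by rw [lie_skew]
      rw [hsk]
      simp only [map_neg, LinearMap.neg_apply, neg_neg]
      exact LieModule.traceForm_apply_lie_apply' ℝ 𝔤 𝔤 X ((K σ : ↥𝔨) : 𝔤) ⁅X, ((K σ : ↥𝔨) : 𝔤)⁆
    rw [Finset.sum_congr rfl fun σ _ => hinv σ, Finset.sum_neg_distrib, hkey]
    ring
  -- double counting
  have hdouble : ∑ σ : (j : Fin m) × Fin (finrank ℝ ↥(𝔨s j)), (1 - κ σ.1)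
      = ∑ _a : Fin (finrank ℝ ↥𝔭), (1 / 2 : ℝ) := by
    calc ∑ σ : (j : Fin m) × Fin (finrank ℝ ↥(𝔨s j)), (1 - κ σ.1)
        = ∑ σ : (j : Fin m) × Fin (finrank ℝ ↥(𝔨s j)), ∑ a,
            killingForm ℝ 𝔤 ⁅((K σ : ↥𝔨) : 𝔤), (P a : 𝔤)⁆ ⁅((K σ : ↥𝔨) : 𝔤), (P a : 𝔤)⁆ :=
          Finset.sum_congr rfl fun σ _ => (hterm_k σ).symm
      _ = ∑ a, ∑ σ : (j : Fin m) × Fin (finrank ℝ ↥(𝔨s j)),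
            killingForm ℝ 𝔤 ⁅((K σ : ↥𝔨) : 𝔤), (P a : 𝔤)⁆ ⁅((K σ : ↥𝔨) : 𝔤), (P a : 𝔤)⁆ :=
          Finset.sum_comm
      _ = ∑ _a : Fin (finrank ℝ ↥𝔭), (1 / 2 : ℝ) :=
          Finset.sum_congr rfl fun a _ => hterm_p a
  rw [← Finset.univ_sigma_univ, Finset.sum_sigma] at hdouble
  simp only [Finset.sum_sub_distrib, Finset.sum_const, Finset.card_univ, Fintype.card_fin,
    nsmul_eq_mul, mul_one] at hdouble
  have hfinal : ∀ j : Fin m, ∑ _i : Fin (finrank ℝ ↥(𝔨s j)), (1 - κ j)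
      = (finrank ℝ ↥(𝔨s j) : ℝ) * (1 - κ j) := by
    intro j
    rw [Finset.sum_const, Finset.card_univ, Fintype.card_fin, nsmul_eq_mul]
  have hsplit2 : ∑ j, (Module.finrank ℝ ↥(𝔨s j) : ℝ) * (1 - κ j)
      = (∑ j, (Module.finrank ℝ ↥(𝔨s j) : ℝ))
        - ∑ j, (Module.finrank ℝ ↥(𝔨s j) : ℝ) * κ j := by
    rw [← Finset.sum_sub_distrib]
    exact Finset.sum_congr rfl fun j _ => by ring
  rw [hsplit2]
  linarith [hdouble]
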